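/- (Easy direction of Theorem 1.) Let Σ be a finite alphabet and let f : List Σ → ℝ be computed by a weighted automaton with n states. Then the Hankel rank of f, i.e. the dimension (Module.rank over ℝ) of the ℝ-linear span inside (List Σ → ℝ) of the set of Hankel rows {v ↦ f(u ++ v) : u ∈ List Σ}, is at most n; in particular it is finite. -/
import Mathlib


open Matrix

/-- easy direction of Theorem 1: if `f : List A → ℝ` is computed by a weighted
automaton with `n` states, then the Hankel rank of `f` — the dimension of the span of the
Hankel rows `v ↦ f (u ++ v)` inside `List A → ℝ` — is at most `n` (in particular finite). -/
theorem wa_hankel_rank_le_states {A : Type*} [Fintype A] {n : ℕ}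
    (α0 αinf : Fin n → ℝ) (M : A → Matrix (Fin n) (Fin n) ℝ)
    (f : List A → ℝ)
    (hf : ∀ w : List A, f w = α0 ⬝ᵥ ((w.map M).prod).mulVec αinf) :
    Module.rank ℝ
      ↥(Submodule.span ℝ
          {g : List A → ℝ | ∃ u : List A, g = fun v : List A => f (u ++ v)}) ≤ n := by
  set φ : Fin n → (List A → ℝ) := fun i v => ((v.map M).prod).mulVec αinf i with hφ
  have hsub : Submodule.span ℝ
      {g : List A → ℝ | ∃ u : List A, g = fun v : List A => f (u ++ v)} ≤
      Submodule.span ℝ (Set.range φ) := by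
    rw [Submodule.span_le]
    rintro g ⟨u, rfl⟩
    have : (fun v : List A => f (u ++ v)) =
        ∑ i : Fin n, (α0 ᵥ* (u.map M).prod) i • φ i := by
      funext v
      simp only [hf, Finset.sum_apply, Pi.smul_apply, smul_eq_mul, hφ]
      rw [List.map_append, List.prod_append, ← Matrix.mulVec_mulVec,
        Matrix.dotProduct_mulVec α0]
      rfl
    rw [this]
    exact Submodule.sum_mem _ fun i _ =>
      Submodule.smul_mem _ _ (Submodule.subset_span ⟨i, rfl⟩)
  refine (Submodule.rank_mono hsub).trans ?_
  refine (rank_span_le _).trans ?_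
  simpa using Cardinal.mk_range_le_lift (f := φ)
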